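/- With notation as in the previous statement, there exist an A-module section s : A ⊗_{Z[P]} Z[Q] → A sending 1⊗a to its image in A if a ∈ P and to 0 if a ∉ P, and an A-module map ι : A ⊗_{Z[P]} Z[Q ⊕ (Q^gp/P^gp)] → A ⊗_{Z[P]} Z[Q] sending 1⊗(a,b) to 1⊗a if b ≠ 0 and to 0 if b = 0; moreover s ∘ α = id_A and α ∘ s + ι ∘ (β₂ − β₁) = id on A ⊗_{Z[P]} Z[Q]. -/

import Mathlib

open TensorProduct

/-- `ι : P →* G` realizes `G` as the group hull (Grothendieck group) `P^gp` of `P`. -/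
def IsGp {P G : Type} [CommMonoid P] [CommGroup G] (ι : P →* G) : Prop :=
  (∀ x : G, ∃ a b : P, x = ι a * (ι b)⁻¹) ∧
    (∀ a b : P, ι a = ι b ↔ ∃ c : P, a * c = b * c)

/-- `P` is saturated via `ι : P → P^gp`. -/
def IsSaturatedVia {P G : Type} [CommMonoid P] [CommGroup G] (ι : P →* G) : Prop :=
  Function.Injective ι ∧
    ∀ x : G, (∃ n : ℕ, 1 ≤ n ∧ x ^ n ∈ Set.range ι) → x ∈ Set.range ι

/-- `P` is fs: finitely generated and saturated. -/
def IsFsVia {P G : Type} [CommMonoid P] [CommGroup G] (ι : P →* G) : Prop :=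
  Monoid.FG P ∧ IsSaturatedVia ι

/-- `h : P → Q` is of Kummer type. -/
def IsKummer {P Q : Type} [CommMonoid P] [CommMonoid Q] (h : P →* Q) : Prop :=
  Function.Injective h ∧ ∀ a : Q, ∃ n : ℕ, 1 ≤ n ∧ a ^ n ∈ Set.range h

/-- Promote a `ℤ`-linear map between modules over a monoid algebra `ℤ[P]` to a
`ℤ[P]`-linear map, given compatibility with the action of singles. -/
lemma aux_single_smul_compat {P : Type} [CommMonoid P] {M N : Type} [AddCommGroup M]
    [AddCommGroup N] [Module (MonoidAlgebra ℤ P) M] [Module (MonoidAlgebra ℤ P) N]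
    (f : M →ₗ[ℤ] N)
    (h1 : ∀ (p : P) (m : M), f (MonoidAlgebra.single p (1 : ℤ) • m)
      = MonoidAlgebra.single p (1 : ℤ) • f m) :
    ∀ (r : MonoidAlgebra ℤ P) (m : M), f (r • m) = r • f m := by
  intro r m
  induction r using MonoidAlgebra.induction_on with
  | of p => exact h1 p m
  | add r₁ r₂ h₁ h₂ => rw [add_smul, map_add, h₁, h₂, add_smul]
  | smul k r hr => rw [smul_assoc, map_zsmul, hr, smul_assoc]

/-- The `ℤ[P]`-linear map given by a `ℤ`-linear map compatible with singles. -/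
def auxLinear {P : Type} [CommMonoid P] {M N : Type} [AddCommGroup M]
    [AddCommGroup N] [Module (MonoidAlgebra ℤ P) M] [Module (MonoidAlgebra ℤ P) N]
    (f : M →ₗ[ℤ] N)
    (h1 : ∀ (p : P) (m : M), f (MonoidAlgebra.single p (1 : ℤ) • m)
      = MonoidAlgebra.single p (1 : ℤ) • f m) :
    M →ₗ[MonoidAlgebra ℤ P] N where
  toFun := f
  map_add' := map_add f
  map_smul' := aux_single_smul_compat f h1

@[simp] lemma auxLinear_apply {P : Type} [CommMonoid P] {M N : Type} [AddCommGroup M]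
    [AddCommGroup N] [Module (MonoidAlgebra ℤ P) M] [Module (MonoidAlgebra ℤ P) N]
    (f : M →ₗ[ℤ] N)
    (h1 : ∀ (p : P) (m : M), f (MonoidAlgebra.single p (1 : ℤ) • m)
      = MonoidAlgebra.single p (1 : ℤ) • f m)
    (m : M) : auxLinear f h1 m = f m := rfl

set_option maxHeartbeats 1000000 in
theorem stmt_5 (P Q G G' : Type) [CommMonoid P] [CommMonoid Q] [CommGroup G] [CommGroup G']
    (ιP : P →* G) (ιQ : Q →* G') (hgpP : IsGp ιP) (hgpQ : IsGp ιQ)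
    (hP : IsFsVia ιP) (hQ : IsFsVia ιQ)
    (h : P →* Q) (hK : IsKummer h)
    (g : G →* G') (hg : g.comp ιP = ιQ.comp h)
    (A : Type) [CommRing A] (φ : P →* A)
    [Algebra (MonoidAlgebra ℤ P) A]
    (hA : ∀ p : P, algebraMap (MonoidAlgebra ℤ P) A (MonoidAlgebra.single p 1) = φ p)
    [Algebra (MonoidAlgebra ℤ P) (MonoidAlgebra ℤ Q)]
    (hPQ : ∀ p : P, algebraMap (MonoidAlgebra ℤ P) (MonoidAlgebra ℤ Q)
      (MonoidAlgebra.single p 1) = MonoidAlgebra.single (h p) 1)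
    [Algebra (MonoidAlgebra ℤ P) (MonoidAlgebra ℤ (Q × (G' ⧸ g.range)))]
    (hPQC : ∀ p : P, algebraMap (MonoidAlgebra ℤ P) (MonoidAlgebra ℤ (Q × (G' ⧸ g.range)))
      (MonoidAlgebra.single p 1) = MonoidAlgebra.single (h p, 1) 1)
    (β₁ β₂ : (A ⊗[MonoidAlgebra ℤ P] MonoidAlgebra ℤ Q) →+*
      (A ⊗[MonoidAlgebra ℤ P] MonoidAlgebra ℤ (Q × (G' ⧸ g.range))))
    (hβ : ∀ x : A, β₁ (x ⊗ₜ 1) = x ⊗ₜ 1 ∧ β₂ (x ⊗ₜ 1) = x ⊗ₜ 1)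
    (hβ₁ : ∀ a : Q, β₁ (1 ⊗ₜ MonoidAlgebra.single a 1) =
      1 ⊗ₜ MonoidAlgebra.single (a, (1 : G' ⧸ g.range)) 1)
    (hβ₂ : ∀ a : Q, β₂ (1 ⊗ₜ MonoidAlgebra.single a 1) =
      1 ⊗ₜ MonoidAlgebra.single (a, (QuotientGroup.mk (ιQ a) : G' ⧸ g.range)) 1) :
    ∃ (s : (A ⊗[MonoidAlgebra ℤ P] MonoidAlgebra ℤ Q) →ₗ[A] A)
      (ι : (A ⊗[MonoidAlgebra ℤ P] MonoidAlgebra ℤ (Q × (G' ⧸ g.range))) →ₗ[A]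
        (A ⊗[MonoidAlgebra ℤ P] MonoidAlgebra ℤ Q)),
      (∀ p : P, s (1 ⊗ₜ MonoidAlgebra.single (h p) 1) = φ p) ∧
      (∀ a : Q, a ∉ Set.range h → s (1 ⊗ₜ MonoidAlgebra.single a 1) = 0) ∧
      (∀ (a : Q) (b : G' ⧸ g.range), b ≠ 1 →
        ι (1 ⊗ₜ MonoidAlgebra.single (a, b) 1) = 1 ⊗ₜ MonoidAlgebra.single a 1) ∧
      (∀ a : Q, ι (1 ⊗ₜ MonoidAlgebra.single (a, (1 : G' ⧸ g.range)) 1) = 0) ∧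
      (∀ x : A, s (x ⊗ₜ 1) = x) ∧
      (∀ y : A ⊗[MonoidAlgebra ℤ P] MonoidAlgebra ℤ Q,
        (s y) ⊗ₜ (1 : MonoidAlgebra ℤ Q) + ι (β₂ y - β₁ y) = y) := by
  classical
  obtain ⟨hhinj, hKum⟩ := hK
  have hιQinj : Function.Injective ιQ := hQ.2.1
  have hgι : ∀ p : P, g (ιP p) = ιQ (h p) := fun p => DFunLike.congr_fun hg p
  -- g is injective
  have ginj : Function.Injective g := by
    intro x y hxy
    obtain ⟨a, b, rfl⟩ := hgpP.1 x
    obtain ⟨c, d, rfl⟩ := hgpP.1 y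
    rw [map_mul, map_mul, map_inv, map_inv, hgι, hgι, hgι, hgι,
      ← div_eq_mul_inv, ← div_eq_mul_inv, div_eq_div_iff_mul_eq_mul,
      ← map_mul, ← map_mul, ← map_mul, ← map_mul] at hxy
    have had : a * d = c * b := hhinj (hιQinj hxy)
    rw [← div_eq_mul_inv, ← div_eq_mul_inv, div_eq_div_iff_mul_eq_mul,
      ← map_mul, ← map_mul, had]
  -- key lemma: if ιQ a lands in the image of g then a ∈ range h
  have hrange : ∀ a : Q, ιQ a ∈ Set.range g → a ∈ Set.range h := by
    rintro a ⟨x, hx⟩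
    obtain ⟨n, hn1, b, hb⟩ := hKum a
    have hxn : x ^ n = ιP b := by
      apply ginj
      rw [map_pow, hx, hgι, hb, map_pow]
    obtain ⟨c, hc⟩ := hP.2.2 x ⟨n, hn1, b, hxn.symm⟩
    exact ⟨c, hιQinj (by rw [← hgι, hc, hx])⟩
  have hmem_iff : ∀ a : Q, ((QuotientGroup.mk (ιQ a) : G' ⧸ g.range) = 1)
      ↔ a ∈ Set.range h := by
    intro a
    rw [QuotientGroup.eq_one_iff]
    constructor
    · intro hm
      exact hrange a (by rwa [MonoidHom.mem_range] at hm)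
    · rintro ⟨p, rfl⟩
      exact ⟨ιP p, hgι p⟩
  -- the base function f0 : Q → A
  set f0 : Q → A := fun a => if hc : a ∈ Set.range h then φ hc.choose else 0 with hf0def
  have hf0h : ∀ p : P, f0 (h p) = φ p := by
    intro p
    have hc : h p ∈ Set.range h := ⟨p, rfl⟩
    simp only [hf0def, dif_pos hc]
    exact congrArg φ (hhinj hc.choose_spec)
  have hf0n : ∀ a : Q, a ∉ Set.range h → f0 a = 0 := by
    intro a ha
    simp only [hf0def, dif_neg ha]
  have hnotr : ∀ (p : P) (a : Q), a ∉ Set.range h → h p * a ∉ Set.range h := by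
    intro p a hc hm
    apply hc
    apply hrange
    obtain ⟨q, hq⟩ := hm
    refine ⟨ιP q * (ιP p)⁻¹, ?_⟩
    rw [map_mul, map_inv, hgι, hgι, hq, map_mul,
      mul_comm (ιQ (h p)) (ιQ a), mul_inv_cancel_right]
  have hf0mul : ∀ (p : P) (a : Q), f0 (h p * a) = φ p * f0 a := by
    intro p a
    by_cases hc : a ∈ Set.range h
    · obtain ⟨c, rfl⟩ := hc
      rw [← map_mul, hf0h, hf0h, map_mul]
    · rw [hf0n _ hc, hf0n _ (hnotr p a hc), mul_zero]
  -- fℤ and f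
  set fℤ : MonoidAlgebra ℤ Q →ₗ[ℤ] A := (Finsupp.lift A ℤ Q f0).comp (MonoidAlgebra.coeffLinearEquiv ℤ).toLinearMap with hfZdef
  have hfℤs : ∀ (a : Q) (k : ℤ), fℤ (MonoidAlgebra.single a k) = k • f0 a := by
    intro a k
    rw [hfZdef]
    show (Finsupp.lift A ℤ Q f0) (Finsupp.single a k) = _
    erw [Finsupp.lift_apply, Finsupp.sum_single_index]
    exact zero_smul ℤ (f0 a)
  have hsmQ : ∀ (p : P) (m : MonoidAlgebra ℤ Q),
      MonoidAlgebra.single p (1 : ℤ) • m = MonoidAlgebra.single (h p) (1 : ℤ) * m := by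
    intro p m; rw [Algebra.smul_def, hPQ]
  have hsA : ∀ (p : P) (x : A), MonoidAlgebra.single p (1 : ℤ) • x = φ p * x := by
    intro p x; rw [Algebra.smul_def, hA]
  have hf1 : ∀ (p : P) (m : MonoidAlgebra ℤ Q),
      fℤ (MonoidAlgebra.single p (1 : ℤ) • m) = MonoidAlgebra.single p (1 : ℤ) • fℤ m := by
    intro p m
    rw [hsmQ, hsA]
    induction m using MonoidAlgebra.induction_on with
    | of a =>
      simp only [MonoidAlgebra.of_apply, MonoidAlgebra.single_mul_single, one_mul, hfℤs,
        hf0mul, one_smul]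
    | add m₁ m₂ h₁ h₂ => rw [mul_add, map_add, h₁, h₂, map_add, mul_add]
    | smul k m hm => rw [mul_smul_comm, map_zsmul, hm, map_zsmul, mul_smul_comm]
  set f : MonoidAlgebra ℤ Q →ₗ[MonoidAlgebra ℤ P] A := auxLinear fℤ hf1 with hfdef
  set s : (A ⊗[MonoidAlgebra ℤ P] MonoidAlgebra ℤ Q) →ₗ[A] A :=
    TensorProduct.AlgebraTensorModule.lift
      (LinearMap.toSpanSingleton A (MonoidAlgebra ℤ Q →ₗ[MonoidAlgebra ℤ P] A) f) with hsdef
  have hs : ∀ (x : A) (n : MonoidAlgebra ℤ Q), s (x ⊗ₜ n) = x * fℤ n := by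
    intro x n
    rw [hsdef, TensorProduct.AlgebraTensorModule.lift_tmul, LinearMap.toSpanSingleton_apply,
      LinearMap.smul_apply, hfdef, auxLinear_apply, smul_eq_mul]
  -- the map ι
  set j0 : Q × (G' ⧸ g.range) → A ⊗[MonoidAlgebra ℤ P] MonoidAlgebra ℤ Q := fun ab =>
    if ab.2 = 1 then 0 else (1 : A) ⊗ₜ MonoidAlgebra.single ab.1 1 with hj0def
  set jℤ : MonoidAlgebra ℤ (Q × (G' ⧸ g.range)) →ₗ[ℤ]
      A ⊗[MonoidAlgebra ℤ P] MonoidAlgebra ℤ Q :=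
    (Finsupp.lift _ ℤ _ j0).comp (MonoidAlgebra.coeffLinearEquiv ℤ).toLinearMap with hjZdef
  have hjℤs : ∀ (ab : Q × (G' ⧸ g.range)) (k : ℤ),
      jℤ (MonoidAlgebra.single ab k) = k • j0 ab := by
    intro ab k
    rw [hjZdef]
    show (Finsupp.lift (A ⊗[MonoidAlgebra ℤ P] MonoidAlgebra ℤ Q) ℤ _ j0) (Finsupp.single ab k) = _
    erw [Finsupp.lift_apply, Finsupp.sum_single_index]
    exact zero_smul ℤ (j0 ab)
  have hsmQC : ∀ (p : P) (m : MonoidAlgebra ℤ (Q × (G' ⧸ g.range))),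
      MonoidAlgebra.single p (1 : ℤ) • m
        = MonoidAlgebra.single ((h p, 1) : Q × (G' ⧸ g.range)) (1 : ℤ) * m := by
    intro p m; rw [Algebra.smul_def, hPQC]
  have hj0pos : ∀ a : Q, j0 (a, (1 : G' ⧸ g.range)) = 0 := by
    intro a; rw [hj0def]; exact if_pos rfl
  have hj0neg : ∀ (a : Q) (b : G' ⧸ g.range), b ≠ 1 →
      j0 (a, b) = (1 : A) ⊗ₜ MonoidAlgebra.single a 1 := by
    intro a b hb; rw [hj0def]; exact if_neg hb
  have hj1 : ∀ (p : P) (m : MonoidAlgebra ℤ (Q × (G' ⧸ g.range))),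
      jℤ (MonoidAlgebra.single p (1 : ℤ) • m) = MonoidAlgebra.single p (1 : ℤ) • jℤ m := by
    intro p m
    rw [hsmQC]
    induction m using MonoidAlgebra.induction_on with
    | of ab =>
      obtain ⟨a, b⟩ := ab
      simp only [MonoidAlgebra.of_apply, MonoidAlgebra.single_mul_single, Prod.mk_mul_mk,
        one_mul, hjℤs, one_smul]
      by_cases hb : b = 1
      · subst hb
        rw [hj0pos, hj0pos, smul_zero]
      · rw [hj0neg _ _ hb, hj0neg _ _ hb, ← TensorProduct.tmul_smul, hsmQ,
          MonoidAlgebra.single_mul_single, one_mul]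
    | add m₁ m₂ h₁ h₂ => rw [mul_add, map_add, h₁, h₂, map_add, smul_add]
    | smul k m hm => rw [mul_smul_comm, map_zsmul, hm, map_zsmul, smul_comm k]
  set j : MonoidAlgebra ℤ (Q × (G' ⧸ g.range)) →ₗ[MonoidAlgebra ℤ P]
      A ⊗[MonoidAlgebra ℤ P] MonoidAlgebra ℤ Q := auxLinear jℤ hj1 with hjdef
  set ι : (A ⊗[MonoidAlgebra ℤ P] MonoidAlgebra ℤ (Q × (G' ⧸ g.range))) →ₗ[A]
      (A ⊗[MonoidAlgebra ℤ P] MonoidAlgebra ℤ Q) :=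
    TensorProduct.AlgebraTensorModule.lift
      (LinearMap.toSpanSingleton A (MonoidAlgebra ℤ (Q × (G' ⧸ g.range))
        →ₗ[MonoidAlgebra ℤ P] A ⊗[MonoidAlgebra ℤ P] MonoidAlgebra ℤ Q) j) with hidef
  have hι : ∀ (x : A) (n : MonoidAlgebra ℤ (Q × (G' ⧸ g.range))),
      ι (x ⊗ₜ n) = x • jℤ n := by
    intro x n
    rw [hidef, TensorProduct.AlgebraTensorModule.lift_tmul, LinearMap.toSpanSingleton_apply,
      LinearMap.smul_apply, hjdef, auxLinear_apply]
  -- assemble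
  refine ⟨s, ι, ?_, ?_, ?_, ?_, ?_, ?_⟩
  · intro p
    rw [hs, hfℤs, hf0h, one_smul, one_mul]
  · intro a ha
    rw [hs, hfℤs, hf0n a ha, smul_zero, mul_zero]
  · intro a b hb
    rw [hι, hjℤs, one_smul, hj0neg a b hb, one_smul]
  · intro a
    rw [hι, hjℤs, one_smul, hj0pos, smul_zero]
  · intro x
    have h1 : fℤ (1 : MonoidAlgebra ℤ Q) = 1 := by
      rw [MonoidAlgebra.one_def, hfℤs, ← h.map_one, hf0h, map_one, one_smul]
    rw [hs, h1, mul_one]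
  · -- the main identity
    have hb1 : ∀ (x : A) (a : Q), β₁ (x ⊗ₜ MonoidAlgebra.single a 1)
        = x ⊗ₜ MonoidAlgebra.single (a, (1 : G' ⧸ g.range)) 1 := by
      intro x a
      rw [show (x ⊗ₜ MonoidAlgebra.single a 1 :
          A ⊗[MonoidAlgebra ℤ P] MonoidAlgebra ℤ Q)
          = (x ⊗ₜ 1) * ((1 : A) ⊗ₜ MonoidAlgebra.single a 1) from by
        rw [Algebra.TensorProduct.tmul_mul_tmul, mul_one, one_mul]]
      rw [map_mul, (hβ x).1, hβ₁, Algebra.TensorProduct.tmul_mul_tmul, mul_one, one_mul]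
    have hb2 : ∀ (x : A) (a : Q), β₂ (x ⊗ₜ MonoidAlgebra.single a 1)
        = x ⊗ₜ MonoidAlgebra.single (a, (QuotientGroup.mk (ιQ a) : G' ⧸ g.range)) 1 := by
      intro x a
      rw [show (x ⊗ₜ MonoidAlgebra.single a 1 :
          A ⊗[MonoidAlgebra ℤ P] MonoidAlgebra ℤ Q)
          = (x ⊗ₜ 1) * ((1 : A) ⊗ₜ MonoidAlgebra.single a 1) from by
        rw [Algebra.TensorProduct.tmul_mul_tmul, mul_one, one_mul]]
      rw [map_mul, (hβ x).2, hβ₂, Algebra.TensorProduct.tmul_mul_tmul, mul_one, one_mul]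
    have core : ∀ (x : A) (a : Q),
        (s (x ⊗ₜ MonoidAlgebra.single a 1)) ⊗ₜ (1 : MonoidAlgebra ℤ Q)
          + ι (β₂ (x ⊗ₜ MonoidAlgebra.single a 1) - β₁ (x ⊗ₜ MonoidAlgebra.single a 1))
        = x ⊗ₜ MonoidAlgebra.single a 1 := by
      intro x a
      by_cases hc : a ∈ Set.range h
      · obtain ⟨p, rfl⟩ := hc
        have hq1 : (QuotientGroup.mk (ιQ (h p)) : G' ⧸ g.range) = 1 :=
          (hmem_iff _).2 ⟨p, rfl⟩
        rw [hb1, hb2, hq1, sub_self, map_zero, add_zero, hs, hfℤs, hf0h, one_smul]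
        have h1 : (MonoidAlgebra.single (h p) 1 : MonoidAlgebra ℤ Q)
            = MonoidAlgebra.single p (1 : ℤ) • (1 : MonoidAlgebra ℤ Q) := by
          rw [hsmQ, mul_one]
        rw [h1, ← TensorProduct.smul_tmul, hsA, mul_comm]
      · have hq1 : (QuotientGroup.mk (ιQ a) : G' ⧸ g.range) ≠ 1 :=
          fun hh => hc ((hmem_iff a).1 hh)
        rw [hb1, hb2, hs, hfℤs, hf0n a hc, smul_zero, mul_zero, zero_tmul, zero_add,
          map_sub, hι, hι, hjℤs, hjℤs, one_smul, one_smul, hj0neg a _ hq1, hj0pos,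
          smul_zero, sub_zero, TensorProduct.smul_tmul', smul_eq_mul, mul_one]
    intro y
    have hFadd : ∀ y z : A ⊗[MonoidAlgebra ℤ P] MonoidAlgebra ℤ Q,
        (s (y + z)) ⊗ₜ (1 : MonoidAlgebra ℤ Q) + ι (β₂ (y + z) - β₁ (y + z))
          = ((s y) ⊗ₜ (1 : MonoidAlgebra ℤ Q) + ι (β₂ y - β₁ y))
            + ((s z) ⊗ₜ (1 : MonoidAlgebra ℤ Q) + ι (β₂ z - β₁ z)) := by
      intro y z
      rw [map_add, map_add, map_add, add_tmul,
        show β₂ y + β₂ z - (β₁ y + β₁ z) = (β₂ y - β₁ y) + (β₂ z - β₁ z) from by abel,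
        map_add]
      abel
    have hFsmul : ∀ (k : ℤ) (y : A ⊗[MonoidAlgebra ℤ P] MonoidAlgebra ℤ Q),
        (s (k • y)) ⊗ₜ (1 : MonoidAlgebra ℤ Q) + ι (β₂ (k • y) - β₁ (k • y))
          = k • ((s y) ⊗ₜ (1 : MonoidAlgebra ℤ Q) + ι (β₂ y - β₁ y)) := by
      intro k y
      rw [map_zsmul, map_zsmul, map_zsmul, ← zsmul_sub, map_zsmul,
        ← TensorProduct.smul_tmul', ← smul_add]
    induction y using TensorProduct.induction_on with
    | zero => simp
    | tmul x n =>
      induction n using MonoidAlgebra.induction_on with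
      | of a =>
        rw [MonoidAlgebra.of_apply]
        exact core x a
      | add n₁ n₂ h₁ h₂ => rw [tmul_add, hFadd, h₁, h₂]
      | smul k n hn => rw [tmul_smul, hFsmul, hn]
    | add y z hy hz => rw [hFadd, hy, hz]
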